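/- The cone of d×d real symmetric positive semidefinite matrices is k-Terracini convex for every k: for any rank-one matrices v_1 v_1', ..., v_k v_k' generating extreme rays, the convex tangent space at their sum equals the sum of the convex tangent spaces at each v_i v_i'. -/

import Mathlib

open Set RealInnerProductSpace Metric

section Defs

variable {E : Type*} [AddCommGroup E] [Module ℝ E]

/-- `C` is a convex cone (as a set). -/
def IsConvexCone (C : Set E) : Prop :=
  Convex ℝ C ∧ ∀ x ∈ C, ∀ t : ℝ, 0 ≤ t → t • x ∈ C

/-- A cone is pointed if it contains no lines through the origin. -/
def IsPointedCone (C : Set E) : Prop := C ∩ (-C) ⊆ {0}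

/-- `x` generates an extreme ray of `C`. -/
def IsExtremeRayGen (C : Set E) (x : E) : Prop :=
  x ∈ C ∧ x ≠ 0 ∧ ∀ y ∈ C, ∀ z ∈ C, y + z = x → ∃ t : ℝ, 0 ≤ t ∧ y = t • x

/-- `F` is a face of the convex cone `C`. -/
def IsFace (C F : Set E) : Prop :=
  F ⊆ C ∧ ∀ x ∈ C, ∀ y ∈ C, x + y ∈ F → x ∈ F ∧ y ∈ F

/-- The minimal face of `C` containing `x` (the intersection of all faces containing `x`). -/
def minFace (C : Set E) (x : E) : Set E := ⋂₀ {F | IsFace C F ∧ x ∈ F}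

variable [TopologicalSpace E]

/-- The cone of feasible directions from `x` into `C`. -/
def feasDir (C : Set E) (x : E) : Set E :=
  {v | ∃ t : ℝ, 0 ≤ t ∧ ∃ z ∈ C, v = t • (z - x)}

/-- The tangent cone of `C` at `x`: the closure of the cone of feasible directions. -/
def tangentCone' (C : Set E) (x : E) : Set E := closure (feasDir C x)

/-- The convex tangent space of `C` at `x`: the lineality space of the tangent cone. -/
def ctSpace (C : Set E) (x : E) : Set E := tangentCone' C x ∩ -(tangentCone' C x)

/-- `C` is `k`-Terracini convex: for any `k` generators of extreme rays, the convex tangent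
space at their sum equals the (subspace) sum of the individual convex tangent spaces. -/
def kTerracini (C : Set E) (k : ℕ) : Prop :=
  ∀ x : Fin k → E, (∀ i, IsExtremeRayGen C (x i)) →
    ctSpace C (∑ i, x i) = (Submodule.span ℝ (⋃ i, ctSpace C (x i)) : Set E)

end Defs

section InnerDefs

variable {E : Type*} [NormedAddCommGroup E] [InnerProductSpace ℝ E]

/-- The normal cone of `C` at `x`: linear functionals (identified with vectors) that are
nonpositive on `C` and vanish at `x`. -/
def normalCone' (C : Set E) (x : E) : Set E :=
  {ℓ : E | (∀ z ∈ C, ⟪ℓ, z⟫ ≤ 0) ∧ ⟪ℓ, x⟫ = 0}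

/-- `F` is an exposed face of the cone `C`. -/
def IsExposedFace (C F : Set E) : Prop :=
  ∃ ℓ : E, (∀ z ∈ C, ⟪ℓ, z⟫ ≤ 0) ∧ F = {z ∈ C | ⟪ℓ, z⟫ = 0}

/-- The set of normalized generators of extreme rays of `K`. -/
def normExt (K : Set E) : Set E := {x | IsExtremeRayGen K x ∧ ‖x‖ = 1}

/-- `K` is `k`-neighborly. -/
def kNeighborly (K : Set E) (k : ℕ) : Prop :=
  ∀ I : Set E, I ⊆ normExt K → I.Finite → I.ncard ≤ k →
    ∃ ℓ : E, (∀ x ∈ I, ⟪ℓ, x⟫ = 0) ∧ ∀ x ∈ normExt K \ I, 0 < ⟪ℓ, x⟫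

/-- `K` is non-degenerate `k`-neighborly: the exposing functional additionally satisfies a
local quadratic growth condition near the exposed extreme rays. -/
def nonDegNeighborly (K : Set E) (k : ℕ) : Prop :=
  ∀ I : Set E, I ⊆ normExt K → I.Finite → I.ncard ≤ k →
    ∃ (ε μ : ℝ) (ℓ : E), 0 < ε ∧ 0 < μ ∧
      (∀ x ∈ I, ⟪ℓ, x⟫ = 0) ∧ (∀ x ∈ normExt K \ I, 0 < ⟪ℓ, x⟫) ∧
      ∀ x ∈ normExt K, (∃ z ∈ I, dist x z < ε) →
        μ * (Metric.infDist x I) ^ 2 ≤ ⟪ℓ, x⟫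

/-- `K` is regular: linear functionals nonnegative on `K` vanishing at an extreme ray grow at
most quadratically near that extreme ray, along normalized extreme rays. -/
def RegularCone (K : Set E) : Prop :=
  ∀ x₀ : E, IsExtremeRayGen K x₀ → ∀ ℓ : E, (∀ z ∈ K, 0 ≤ ⟪ℓ, z⟫) → ⟪ℓ, x₀⟫ = 0 →
    ∃ δ ν : ℝ, 0 < δ ∧ 0 < ν ∧
      ∀ x ∈ normExt K, ‖x - x₀‖ < δ → ⟪ℓ, x⟫ ≤ ν * ‖x - x₀‖ ^ 2

end InnerDefs


section PsdTerraciniAux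

open Matrix Filter Topology

namespace PsdAux

variable {d k : ℕ}

lemma vecMulVec_mulVec' (a b x : Fin d → ℝ) :
    vecMulVec a b *ᵥ x = (b ⬝ᵥ x) • a := by
  ext j
  simp [mulVec, vecMulVec_apply, dotProduct, Finset.mul_sum, mul_assoc, Finset.sum_mul]
  exact Finset.sum_congr rfl fun i _ => by ring

lemma psd_vecMulVec (a : Fin d → ℝ) : (vecMulVec a a).PosSemidef := by
  rw [Matrix.posSemidef_iff_dotProduct_mulVec]
  constructor
  · ext i j
    simp [conjTranspose_apply, vecMulVec_apply, mul_comm]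
  · intro x
    rw [star_trivial, vecMulVec_mulVec', dotProduct_smul, smul_eq_mul, dotProduct_comm]
    exact mul_self_nonneg _

lemma psd_sum (vv : Fin k → Fin d → ℝ) :
    (∑ i, vecMulVec (vv i) (vv i)).PosSemidef := by
  classical
  refine Finset.sum_induction _ _ (fun a b ha hb => ha.add hb) ?_ ?_
  · exact Matrix.PosSemidef.zero
  · exact fun i _ => psd_vecMulVec (vv i)

lemma expand (vv w : Fin k → Fin d → ℝ) (t : ℝ) :
    ∑ i, vecMulVec (vv i + t • w i) (vv i + t • w i)
      = (∑ i, vecMulVec (vv i) (vv i))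
        + t • (∑ i, (vecMulVec (vv i) (w i) + vecMulVec (w i) (vv i)))
        + (t * t) • (∑ i, vecMulVec (w i) (w i)) := by
  ext j l
  simp only [Matrix.sum_apply, Matrix.add_apply, Matrix.smul_apply, vecMulVec_apply,
    Pi.add_apply, Pi.smul_apply, smul_eq_mul, Finset.mul_sum]
  rw [← Finset.sum_add_distrib, ← Finset.sum_add_distrib]
  exact Finset.sum_congr rfl fun i _ => by ring


lemma herm_transpose {z : Matrix (Fin d) (Fin d) ℝ} (h : z.IsHermitian) : zᵀ = z := by
  ext i j
  have := congrFun (congrFun h.eq i) j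
  simpa [conjTranspose_apply] using this

lemma ctSpace_subset_sym (X : Matrix (Fin d) (Fin d) ℝ) (hX : Xᵀ = X)
    {Q : Matrix (Fin d) (Fin d) ℝ}
    (hQ : Q ∈ ctSpace {A : Matrix (Fin d) (Fin d) ℝ | A.PosSemidef} X) :
    Qᵀ = Q ∧ ∀ u, X *ᵥ u = 0 → u ⬝ᵥ Q *ᵥ u = 0 := by
  set S : Set (Matrix (Fin d) (Fin d) ℝ) :=
    {Q | Qᵀ = Q ∧ ∀ u, X *ᵥ u = 0 → 0 ≤ u ⬝ᵥ Q *ᵥ u} with hS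
  have hclosed : IsClosed S := by
    have : S = {Q : Matrix (Fin d) (Fin d) ℝ | Qᵀ = Q} ∩
        ⋂ u ∈ {u : Fin d → ℝ | X *ᵥ u = 0}, {Q : Matrix (Fin d) (Fin d) ℝ | 0 ≤ u ⬝ᵥ Q *ᵥ u} := by
      ext Q
      simp only [hS, Set.mem_setOf_eq, Set.mem_inter_iff, Set.mem_iInter]
    rw [this]
    refine IsClosed.inter (isClosed_eq (continuous_id.matrix_transpose) continuous_id) ?_
    refine isClosed_biInter fun u _ => isClosed_le continuous_const ?_
    exact Continuous.dotProduct continuous_const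
      (Continuous.matrix_mulVec continuous_id continuous_const)
  have hsub : feasDir {A : Matrix (Fin d) (Fin d) ℝ | A.PosSemidef} X ⊆ S := by
    rintro _ ⟨t, ht, z, hz, rfl⟩
    constructor
    · rw [transpose_smul, transpose_sub, hX, herm_transpose hz.1]
    · intro u hu
      rw [smul_mulVec, dotProduct_smul, sub_mulVec, hu, sub_zero, smul_eq_mul]
      have := hz.dotProduct_mulVec_nonneg u
      rw [star_trivial] at this
      exact mul_nonneg ht this
  have hT : tangentCone' {A : Matrix (Fin d) (Fin d) ℝ | A.PosSemidef} X ⊆ S :=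
    closure_minimal hsub hclosed
  obtain ⟨h1, h2⟩ := hQ
  have hQ1 := hT h1
  have hQ2 := hT (Set.mem_neg.mp h2)
  refine ⟨hQ1.1, fun u hu => le_antisymm ?_ (hQ1.2 u hu)⟩
  have := hQ2.2 u hu
  rw [neg_mulVec, dotProduct_neg] at this
  linarith


lemma mem_ctSpace_sum (vv w : Fin k → Fin d → ℝ) :
    (∑ i, (vecMulVec (vv i) (w i) + vecMulVec (w i) (vv i)))
      ∈ ctSpace {A : Matrix (Fin d) (Fin d) ℝ | A.PosSemidef}
        (∑ i, vecMulVec (vv i) (vv i)) := by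
  set X : Matrix (Fin d) (Fin d) ℝ := ∑ i, vecMulVec (vv i) (vv i) with hX
  set M : Matrix (Fin d) (Fin d) ℝ :=
    ∑ i, (vecMulVec (vv i) (w i) + vecMulVec (w i) (vv i)) with hM
  set R : Matrix (Fin d) (Fin d) ℝ := ∑ i, vecMulVec (w i) (w i) with hR
  have key : ∀ s : ℝ, s * s = 1 →
      s • M ∈ tangentCone' {A : Matrix (Fin d) (Fin d) ℝ | A.PosSemidef} X := by
    intro s hs
    have hmem : ∀ t : ℝ, 0 < t →
        s • M + t • R ∈ feasDir {A : Matrix (Fin d) (Fin d) ℝ | A.PosSemidef} X := by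
      intro t ht
      refine ⟨1/t, by positivity,
        ∑ i, vecMulVec (vv i + (s*t) • w i) (vv i + (s*t) • w i), psd_sum _, ?_⟩
      rw [expand vv w (s*t), ← hX, ← hM, ← hR, add_assoc, add_sub_cancel_left, smul_add,
        smul_smul, smul_smul]
      have h1 : 1/t * (s*t) = s := by field_simp
      have h2 : 1/t * (s*t*(s*t)) = t := by field_simp; linear_combination hs
      rw [h1, h2]
    have htend : Tendsto (fun n : ℕ => s • M + (1/(n+1:ℝ)) • R) atTop (𝓝 (s • M)) := by
      have h0 : Tendsto (fun n : ℕ => (1/(n+1:ℝ))) atTop (𝓝 0) :=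
        tendsto_one_div_add_atTop_nhds_zero_nat
      have := tendsto_const_nhds (x := s • M) (f := atTop (α := ℕ)) |>.add (h0.smul_const R)
      simpa using this
    exact mem_closure_of_tendsto htend
      (Filter.Eventually.of_forall fun n => hmem _ (by positivity))
  constructor
  · simpa using key 1 (by norm_num)
  · rw [Set.mem_neg]
    simpa using key (-1) (by norm_num)


noncomputable def le' (d : ℕ) : (Fin d → ℝ) ≃ₗ[ℝ] EuclideanSpace ℝ (Fin d) :=
  (WithLp.linearEquiv 2 ℝ (Fin d → ℝ)).symm

lemma dot_eq_inner (a b : Fin d → ℝ) : a ⬝ᵥ b = (inner ℝ (le' d a) (le' d b) : ℝ) := by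
  rw [PiLp.inner_apply]
  simp [dotProduct, RCLike.inner_apply, le', mul_comm]

lemma exists_decomp (v : Fin k → (Fin d → ℝ)) (Q : Matrix (Fin d) (Fin d) ℝ)
    (hsym : Qᵀ = Q) (hker : ∀ u, (∀ i, v i ⬝ᵥ u = 0) → u ⬝ᵥ Q *ᵥ u = 0) :
    ∃ w : Fin k → (Fin d → ℝ),
      Q = ∑ i, (vecMulVec (v i) (w i) + vecMulVec (w i) (v i)) := by
  classical
  set V : Submodule ℝ (EuclideanSpace ℝ (Fin d)) :=
    Submodule.span ℝ (Set.range fun i => le' d (v i)) with hV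
  set p : (Fin d → ℝ) → (Fin d → ℝ) :=
    fun x => (le' d).symm (V.orthogonalProjectionOnto (le' d x) : EuclideanSpace ℝ (Fin d)) with hp
  have hple : ∀ x, le' d (p x) = (V.orthogonalProjectionOnto (le' d x) : EuclideanSpace ℝ (Fin d)) :=
    fun x => (le' d).apply_symm_apply _
  -- F2 : complement is orthogonal to each v i
  have F2 : ∀ (x : Fin d → ℝ) (i : Fin k), v i ⬝ᵥ (x - p x) = 0 := by
    intro x i
    rw [dot_eq_inner, map_sub, hple]
    have hmem : le' d x - (V.orthogonalProjectionOnto (le' d x) : EuclideanSpace ℝ (Fin d)) ∈ Vᗮ :=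
      V.sub_starProjection_mem_orthogonal _
    exact (Submodule.mem_orthogonal V _).mp hmem _ (Submodule.subset_span ⟨i, rfl⟩)
  -- F3 : self-adjointness
  have F3 : ∀ x y : Fin d → ℝ, p x ⬝ᵥ y = x ⬝ᵥ p y := by
    intro x y
    rw [dot_eq_inner, dot_eq_inner, hple, hple]
    exact V.inner_starProjection_left_eq_right _ _
  -- F1 : image of p lies in the span of the v i
  have F1 : ∀ x : Fin d → ℝ, ∃ c : Fin k → ℝ, p x = ∑ i, c i • v i := by
    intro x
    have hmem : (V.orthogonalProjectionOnto (le' d x) : EuclideanSpace ℝ (Fin d)) ∈ V :=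
      SetLike.coe_mem _
    rw [hV, Submodule.mem_span_range_iff_exists_fun] at hmem
    obtain ⟨c, hc⟩ := hmem
    refine ⟨c, ?_⟩
    rw [← hV] at hc
    have : p x = (le' d).symm ((V.orthogonalProjectionOnto (le' d x) : EuclideanSpace ℝ (Fin d))) := rfl
    rw [this, ← hc, map_sum]
    simp
  -- symmetry of the bilinear form
  have hBsym : ∀ a b : Fin d → ℝ, a ⬝ᵥ Q *ᵥ b = b ⬝ᵥ Q *ᵥ a := by
    intro a b
    conv_lhs => rw [← hsym]
    rw [mulVec_transpose, dotProduct_comm, ← dotProduct_mulVec]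
  -- polarization
  have hker2 : ∀ a b : Fin d → ℝ, (∀ i, v i ⬝ᵥ a = 0) → (∀ i, v i ⬝ᵥ b = 0) →
      a ⬝ᵥ Q *ᵥ b = 0 := by
    intro a b ha hb
    have h1 := hker (a + b) (fun i => by rw [dotProduct_add, ha i, hb i, add_zero])
    have h2 := hker a ha
    have h3 := hker b hb
    have h4 := hBsym a b
    rw [mulVec_add, dotProduct_add, add_dotProduct, add_dotProduct] at h1
    linarith
  -- the key bilinear identity
  have key : ∀ a b : Fin d → ℝ,
      (p a) ⬝ᵥ Q *ᵥ (b - (2⁻¹ : ℝ) • p b) + (p b) ⬝ᵥ Q *ᵥ (a - (2⁻¹ : ℝ) • p a)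
        = a ⬝ᵥ Q *ᵥ b := by
    intro a b
    have h0 : (a - p a) ⬝ᵥ Q *ᵥ (b - p b) = 0 :=
      hker2 _ _ (fun i => F2 a i) (fun i => F2 b i)
    simp only [mulVec_sub, dotProduct_sub, sub_dotProduct, mulVec_smul, dotProduct_smul,
      smul_eq_mul] at h0 ⊢
    have g1 := hBsym (p b) a
    have g2 := hBsym (p b) (p a)
    linarith
  -- choose the coefficients
  choose c hc using fun l : Fin d =>
    F1 (Q *ᵥ (Pi.single l 1 - (2⁻¹ : ℝ) • p (Pi.single l 1)))
  refine ⟨fun i => fun l => c l i, ?_⟩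
  ext j l
  have hcol : ∀ (l j : Fin d),
      p (Q *ᵥ (Pi.single l 1 - (2⁻¹ : ℝ) • p (Pi.single l 1))) j = ∑ i, c l i * v i j := by
    intro l j
    rw [hc l]
    simp [Finset.sum_apply]
  have hcol' : ∀ (l j : Fin d),
      p (Q *ᵥ (Pi.single l 1 - (2⁻¹ : ℝ) • p (Pi.single l 1))) j
        = (p (Pi.single j 1)) ⬝ᵥ Q *ᵥ (Pi.single l 1 - (2⁻¹ : ℝ) • p (Pi.single l 1)) := by
    intro l j
    rw [F3, single_dotProduct, one_mul]
  have hQjl : Q j l = (Pi.single j 1 : Fin d → ℝ) ⬝ᵥ Q *ᵥ (Pi.single l 1) := by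
    simp [mulVec_single]
  rw [Matrix.sum_apply]
  simp only [Matrix.add_apply, vecMulVec_apply]
  rw [Finset.sum_add_distrib]
  have e1 : ∑ i, v i j * c l i = ∑ i, c l i * v i j :=
    Finset.sum_congr rfl fun i _ => by ring
  rw [e1, ← hcol l j, hcol' l j, ← hcol j l, hcol' j l, key, hQjl]


/-- the symmetric matrices vanishing as a quadratic form on the common kernel -/
def D (v : Fin k → (Fin d → ℝ)) : Submodule ℝ (Matrix (Fin d) (Fin d) ℝ) where
  carrier := {Q | Qᵀ = Q ∧ ∀ u : Fin d → ℝ, (∀ i, v i ⬝ᵥ u = 0) → u ⬝ᵥ Q *ᵥ u = 0}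
  add_mem' := by
    rintro a b ⟨ha1, ha2⟩ ⟨hb1, hb2⟩
    refine ⟨by rw [transpose_add, ha1, hb1], fun u hu => ?_⟩
    rw [add_mulVec, dotProduct_add, ha2 u hu, hb2 u hu, add_zero]
  zero_mem' := by
    refine ⟨transpose_zero, fun u hu => ?_⟩
    simp
  smul_mem' := by
    rintro t a ⟨ha1, ha2⟩
    refine ⟨by rw [transpose_smul, ha1], fun u hu => ?_⟩
    rw [smul_mulVec, dotProduct_smul, ha2 u hu, smul_zero]

lemma sum_vecMulVec_transpose (v : Fin k → (Fin d → ℝ)) :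
    (∑ i, vecMulVec (v i) (v i))ᵀ = ∑ i, vecMulVec (v i) (v i) := by
  ext j l
  simp only [transpose_apply, Matrix.sum_apply, vecMulVec_apply]
  exact Finset.sum_congr rfl fun i _ => by ring

lemma sum_vecMulVec_mulVec (v : Fin k → (Fin d → ℝ)) (u : Fin d → ℝ) :
    (∑ i, vecMulVec (v i) (v i)) *ᵥ u = ∑ i, (v i ⬝ᵥ u) • v i := by
  ext j
  simp only [mulVec, Matrix.sum_apply, vecMulVec_apply, dotProduct, Finset.sum_apply,
    Pi.smul_apply, smul_eq_mul, Finset.sum_mul, Finset.mul_sum]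
  rw [Finset.sum_comm]
  exact Finset.sum_congr rfl fun i _ => Finset.sum_congr rfl fun m _ => by ring

lemma ker_iff (v : Fin k → (Fin d → ℝ)) (u : Fin d → ℝ) :
    (∑ i, vecMulVec (v i) (v i)) *ᵥ u = 0 ↔ ∀ i, v i ⬝ᵥ u = 0 := by
  constructor
  · intro h
    have h2 : u ⬝ᵥ ((∑ i, vecMulVec (v i) (v i)) *ᵥ u) = 0 := by rw [h, dotProduct_zero]
    rw [sum_vecMulVec_mulVec] at h2
    have dps : u ⬝ᵥ (∑ i, (v i ⬝ᵥ u) • v i) = ∑ i, u ⬝ᵥ ((v i ⬝ᵥ u) • v i) := by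
      simp only [dotProduct, Finset.sum_apply, Pi.smul_apply, smul_eq_mul, Finset.mul_sum]
      exact Finset.sum_comm

    have h3 : ∑ i, (v i ⬝ᵥ u) * (v i ⬝ᵥ u) = 0 := by
      rw [← h2, dps]
      refine Finset.sum_congr rfl fun i _ => ?_
      rw [dotProduct_smul, smul_eq_mul, dotProduct_comm u (v i)]
    intro i
    have := (Finset.sum_eq_zero_iff_of_nonneg
      (fun i _ => mul_self_nonneg (v i ⬝ᵥ u))).mp h3 i (Finset.mem_univ i)
    exact mul_self_eq_zero.mp this
  · intro h
    rw [sum_vecMulVec_mulVec]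
    exact Finset.sum_eq_zero fun i _ => by rw [h i, zero_smul]

theorem psd_terracini' (v : Fin k → (Fin d → ℝ)) :
    ctSpace {A : Matrix (Fin d) (Fin d) ℝ | A.PosSemidef}
        (∑ i, Matrix.vecMulVec (v i) (v i))
      = (Submodule.span ℝ (⋃ i, ctSpace {A : Matrix (Fin d) (Fin d) ℝ | A.PosSemidef}
          (Matrix.vecMulVec (v i) (v i))) : Set (Matrix (Fin d) (Fin d) ℝ)) := by
  classical
  -- each individual ctSpace is inside D v
  have hsingle : ∀ i : Fin k,
      ctSpace {A : Matrix (Fin d) (Fin d) ℝ | A.PosSemidef} (vecMulVec (v i) (v i))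
        ⊆ (D v : Set (Matrix (Fin d) (Fin d) ℝ)) := by
    intro i Q hQ
    have hXs : (vecMulVec (v i) (v i))ᵀ = vecMulVec (v i) (v i) := by
      ext j l; simp [vecMulVec_apply, mul_comm]
    obtain ⟨h1, h2⟩ := ctSpace_subset_sym _ hXs hQ
    refine ⟨h1, fun u hu => h2 u ?_⟩
    rw [vecMulVec_mulVec', hu i, zero_smul]
  -- D v is inside the span
  have hDspan : (D v : Set (Matrix (Fin d) (Fin d) ℝ)) ⊆
      (Submodule.span ℝ (⋃ i, ctSpace {A : Matrix (Fin d) (Fin d) ℝ | A.PosSemidef}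
          (Matrix.vecMulVec (v i) (v i))) : Set (Matrix (Fin d) (Fin d) ℝ)) := by
    rintro Q ⟨h1, h2⟩
    obtain ⟨w, rfl⟩ := exists_decomp v Q h1 h2
    refine Submodule.sum_mem _ fun i _ => Submodule.subset_span ?_
    refine Set.mem_iUnion.mpr ⟨i, ?_⟩
    have := mem_ctSpace_sum (fun _ : Fin 1 => v i) (fun _ : Fin 1 => w i)
    simpa using this
  -- D v is inside the ctSpace at the sum
  have hDct : (D v : Set (Matrix (Fin d) (Fin d) ℝ)) ⊆
      ctSpace {A : Matrix (Fin d) (Fin d) ℝ | A.PosSemidef}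
        (∑ i, Matrix.vecMulVec (v i) (v i)) := by
    rintro Q ⟨h1, h2⟩
    obtain ⟨w, rfl⟩ := exists_decomp v Q h1 h2
    exact mem_ctSpace_sum v w
  apply Set.Subset.antisymm
  · -- ctSpace ⊆ D ⊆ span
    intro Q hQ
    obtain ⟨h1, h2⟩ := ctSpace_subset_sym _ (sum_vecMulVec_transpose v) hQ
    exact hDspan ⟨h1, fun u hu => h2 u ((ker_iff v u).mpr hu)⟩
  · -- span ≤ D ⊆ ctSpace
    intro Q hQ
    have hle : Submodule.span ℝ (⋃ i, ctSpace {A : Matrix (Fin d) (Fin d) ℝ | A.PosSemidef}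
        (Matrix.vecMulVec (v i) (v i))) ≤ D v :=
      Submodule.span_le.mpr (Set.iUnion_subset hsingle)
    exact hDct (hle hQ)


end PsdAux

end PsdTerraciniAux

/-- The positive semidefinite cone is `k`-Terracini convex for every `k`: for any
rank-one matrices `vᵢvᵢ'` generating extreme rays, the convex tangent space at their sum equals
the sum of the convex tangent spaces at each `vᵢvᵢ'`. -/
theorem psd_terracini {d k : ℕ} (v : Fin k → (Fin d → ℝ)) (hv : ∀ i, v i ≠ 0) :
    ctSpace {A : Matrix (Fin d) (Fin d) ℝ | A.PosSemidef}
        (∑ i, Matrix.vecMulVec (v i) (v i))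
      = (Submodule.span ℝ (⋃ i, ctSpace {A : Matrix (Fin d) (Fin d) ℝ | A.PosSemidef}
          (Matrix.vecMulVec (v i) (v i))) : Set (Matrix (Fin d) (Fin d) ℝ)) :=
  PsdAux.psd_terracini' v
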